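/- Let F be a finite field of characteristic p and let n ≥ 1. For every vector z : Fin n → F with ∑_{k} z_k = 1, there exist a permutation σ of Fin n, an element b ∈ F with b ≠ 0, and an integer i with 1 ≤ i ≤ n, such that, writing z' = z ∘ σ: (i) for every j with i ≤ j ≤ n, the partial sum z'_1 + z'_2 + ⋯ + z'_j of the first j entries is nonzero; (ii) z'_1 = z'_2 = ⋯ = z'_i = b; and (iii) p divides i − 1. -/

import Mathlib

open Finset

private lemma sum_filter_lt_eq {M : Type*} [AddCommMonoid M] {m : ℕ} (f : Fin m → M) (j : ℕ) :
    ∑ k ∈ Finset.univ.filter (fun k : Fin m => (k : ℕ) < j), f k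
      = ∑ a ∈ Finset.range j, if h : a < m then f ⟨a, h⟩ else 0 := by
  induction j with
  | zero => simp
  | succ j ih =>
    rw [Finset.sum_range_succ, ← ih]
    by_cases hj : j < m
    · have hins : Finset.univ.filter (fun k : Fin m => (k : ℕ) < j + 1)
          = insert (⟨j, hj⟩ : Fin m) (Finset.univ.filter (fun k : Fin m => (k : ℕ) < j)) := by
        ext k
        simp [Nat.lt_succ_iff_lt_or_eq, Fin.ext_iff, or_comm]
        constructor <;> intro h <;> omega
      rw [hins, Finset.sum_insert (by simp), dif_pos hj, add_comm]
    · rw [dif_neg hj, add_zero]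
      congr 1
      ext k
      have hk : (k : ℕ) < m := k.isLt
      have hm : m ≤ j := Nat.le_of_not_lt hj
      simp only [Finset.mem_filter, Finset.mem_univ, true_and]
      constructor
      · intro _; exact lt_of_lt_of_le hk hm
      · intro h; exact Nat.lt_succ_of_lt (lt_of_lt_of_le hk hm)

private lemma aux_normal_form {F : Type*} [Field F] [Fintype F] (p : ℕ) [CharP F p] :
    ∀ n : ℕ, 1 ≤ n → ∀ z : Fin n → F, (∑ k, z k) ≠ 0 →
    ∃ (σ : Equiv.Perm (Fin n)) (b : F) (i : ℕ),
      b ≠ 0 ∧ 1 ≤ i ∧ i ≤ n ∧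
      (∀ j : ℕ, i ≤ j → j ≤ n →
        ∑ k ∈ Finset.univ.filter (fun k : Fin n => (k : ℕ) < j), z (σ k) ≠ 0) ∧
      (∀ k : Fin n, (k : ℕ) < i → z (σ k) = b) ∧
      p ∣ i - 1 := by
  intro n
  induction n with
  | zero => intro h; omega
  | succ n IH =>
    intro _ z hs
    set s : F := ∑ k, z k with hs_def
    by_cases hall : ∀ k, z k = s
    · -- all entries equal s
      refine ⟨1, s, n + 1, hs, by omega, le_rfl, ?_, ?_, ?_⟩
      · intro j hj1 hj2
        have hj : j = n + 1 := le_antisymm hj2 hj1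
        subst hj
        have : Finset.univ.filter (fun k : Fin (n+1) => (k : ℕ) < n + 1) = Finset.univ :=
          Finset.filter_true_of_mem fun k _ => k.isLt
        rw [this]
        simpa using hs
      · intro k _; simpa using hall k
      · -- p ∣ n
        have h1 : s = ((n + 1 : ℕ) : F) * s := by
          conv_lhs => rw [hs_def, Finset.sum_congr rfl (fun k _ => hall k)]
          rw [Finset.sum_const, Finset.card_univ, Fintype.card_fin, nsmul_eq_mul]
        have h2 : ((n : ℕ) : F) * s = 0 := by
          have := h1
          push_cast at this
          linear_combination -this
        have h3 : ((n : ℕ) : F) = 0 := by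
          rcases mul_eq_zero.mp h2 with h | h
          · exact h
          · exact absurd h hs
        have := (CharP.cast_eq_zero_iff F p n).mp h3
        simpa using this
    · push_neg at hall
      obtain ⟨k0, hk0⟩ := hall
      -- n ≥ 1
      have hn1 : 1 ≤ n := by
        by_contra h
        have hn0 : n = 0 := by omega
        subst hn0
        apply hk0
        rw [hs_def]
        have hk00 : k0 = (0 : Fin (0+1)) := Fin.fin_one_eq_zero k0
        rw [hk00]
        exact (Fin.sum_univ_one z).symm
      set τ : Equiv.Perm (Fin (n+1)) := Equiv.swap k0 (Fin.last n) with hτ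
      set y : Fin (n+1) → F := fun k => z (τ k) with hy
      have hylast : y (Fin.last n) = z k0 := by
        simp [hy, hτ, Equiv.swap_apply_right]
      have hysum : ∑ k, y k = s := by
        rw [hs_def, hy]
        exact Equiv.sum_comp τ z
      set w : Fin n → F := fun m => y m.castSucc with hw
      have hwsum : ∑ m, w m = s - z k0 := by
        have := Fin.sum_univ_castSucc y
        rw [hysum, hylast] at this
        simp only [hw]
        linear_combination -this
      have hwne : (∑ m, w m) ≠ 0 := by
        rw [hwsum]; intro h; apply hk0; linear_combination -h
      obtain ⟨σ', b, i, hb, hi1, hin, hps, hval, hdvd⟩ := IH hn1 w hwne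
      -- extend σ' to Fin (n+1) fixing last
      set ext : Equiv.Perm (Fin (n+1)) :=
        (finSuccEquivLast.symm).permCongr (Equiv.optionCongr σ') with hext
      have hext_cast : ∀ m : Fin n, ext m.castSucc = (σ' m).castSucc := by
        intro m
        simp [hext, Equiv.permCongr_apply]
      have hext_last : ext (Fin.last n) = Fin.last n := by
        simp [hext, Equiv.permCongr_apply]
      set σ : Equiv.Perm (Fin (n+1)) := ext.trans τ with hσ
      have hσc : ∀ m : Fin n, z (σ m.castSucc) = w (σ' m) := by
        intro m
        simp only [hσ, Equiv.trans_apply, hext_cast]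
        rfl
      have hσsum : ∑ k, z (σ k) = s := by
        rw [hs_def]; exact Equiv.sum_comp σ z
      -- key claim: partial sums for j ≤ n agree with those of w ∘ σ'
      have hclaim : ∀ j : ℕ, j ≤ n →
          ∑ k ∈ Finset.univ.filter (fun k : Fin (n+1) => (k : ℕ) < j), z (σ k)
            = ∑ m ∈ Finset.univ.filter (fun m : Fin n => (m : ℕ) < j), w (σ' m) := by
        intro j hj
        rw [sum_filter_lt_eq (fun k => z (σ k)) j, sum_filter_lt_eq (fun m => w (σ' m)) j]
        refine Finset.sum_congr rfl fun a ha => ?_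
        have haj : a < j := Finset.mem_range.mp ha
        have han : a < n := lt_of_lt_of_le haj hj
        have han1 : a < n + 1 := by omega
        rw [dif_pos han1, dif_pos han]
        have : (⟨a, han1⟩ : Fin (n+1)) = (⟨a, han⟩ : Fin n).castSucc := by
          ext; simp
        rw [this, hσc]
      refine ⟨σ, b, i, hb, hi1, by omega, ?_, ?_, hdvd⟩
      · intro j hj1 hj2
        rcases Nat.lt_or_ge j (n+1) with hj | hj
        · have hjn : j ≤ n := by omega
          rw [hclaim j hjn]
          exact hps j hj1 hjn
        · have hj' : j = n + 1 := by omega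
          subst hj'
          have huniv : Finset.univ.filter (fun k : Fin (n+1) => (k : ℕ) < n + 1) = Finset.univ :=
            Finset.filter_true_of_mem fun k _ => k.isLt
          rw [huniv, hσsum]
          exact hs
      · intro k hk
        have hkn : (k : ℕ) < n := lt_of_lt_of_le hk hin
        have hkeq : k = (⟨(k : ℕ), hkn⟩ : Fin n).castSucc := by ext; simp
        rw [hkeq, hσc]
        exact hval _ hk

theorem exists_perm_normal_form
    {F : Type*} [Field F] [Fintype F] (p : ℕ) [CharP F p]
    (n : ℕ) (hn : 1 ≤ n) (z : Fin n → F) (hz : ∑ k, z k = 1) :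
    ∃ (σ : Equiv.Perm (Fin n)) (b : F) (i : ℕ),
      b ≠ 0 ∧ 1 ≤ i ∧ i ≤ n ∧
      (∀ j : ℕ, i ≤ j → j ≤ n →
        ∑ k ∈ Finset.univ.filter (fun k : Fin n => (k : ℕ) < j), z (σ k) ≠ 0) ∧
      (∀ k : Fin n, (k : ℕ) < i → z (σ k) = b) ∧
      p ∣ i - 1 := by
  exact aux_normal_form p n hn z (by rw [hz]; exact one_ne_zero)
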